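/- Let f be a homeomorphism of the open unit disk 𝔻, let n ≥ 1 be an integer, and for each i ∈ ℤ/nℤ let z_i ∈ 𝔻 and α_i, ω_i ∈ S¹ be such that the 2n points α_i, ω_i are pairwise distinct, f^k(z_i) → α_i as k → −∞ and f^k(z_i) → ω_i as k → +∞. Set O_i = {f^m(z_i) : m ∈ ℤ}. For each i ∈ ℤ/nℤ let Γ_i : ℝ → 𝔻 be a continuous map such that for every k ∈ ℤ the restriction Γ_i|[k,k+1] is an injective parametrization of a segment γ_i^k with Γ_i(k) = f^k(z_i) and Γ_i(k+1) = f^{k+1}(z_i), where the segments γ_i^k satisfy: each γ_i^k is a translation arc for f joining f^k(z_i) to f^{k+1}(z_i); f(γ_i^k) ∩ γ_i^{k'} = ∅ for k' < k; (γ_i^k) converges to {α_i} as k → −∞ and to {ω_i} as k → +∞; γ_i^k ∩ O_i = {f^k(z_i), f^{k+1}(z_i)}; γ_i^k ∩ O_{i'} = ∅ if i' ≠ i; γ_i^k ∩ γ_{i'}^{k'} is finite if (i',k') ∉ {(i,k−1),(i,k),(i,k+1)}; and γ_i^k ∩ γ_{i'}^{k'} ∩ γ_{i''}^{k''} = ∅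 whenever (i,k),(i',k'),(i'',k'') are pairwise distinct. Then: (1) for every i and k, Γ_i(t) = f^k(z_i) holds only for t = k; (2) no point of 𝔻 is attained by Γ_i at three distinct parameters; (3) Γ_i(ℝ) ∩ O_{i'} = ∅ if i ≠ i'; (4) Γ_i(ℝ) ∩ Γ_{i'}(ℝ) is finite if i ≠ i'; (5) if i ≠ i', no point of Γ_i(ℝ) ∩ Γ_{i'}(ℝ) is attained by Γ_i, or by Γ_{i'}, at two distinct parameters; (6) Γ_i(ℝ) ∩ Γ_{i'}(ℝ) ∩ Γ_{i''}(ℝ) = ∅ whenever i, i', i'' are pairwise distinct. (Proposition 4.4.) -/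

import Mathlib

open Set Filter Metric Topology

noncomputable section

/-- The open unit disk in the complex plane. -/
abbrev Disk : Set ℂ := Metric.ball 0 1

/-- The `k`-th iterate (`k ∈ ℤ`) of a homeomorphism of the open unit disk. -/
def fiter (f : ↥Disk ≃ₜ ↥Disk) (k : ℤ) : ↥Disk → ↥Disk := fun z => (f.toEquiv ^ k) z

/-- A subset `X` of the disk is free for `f` if `f(X) ∩ X = ∅`. -/
def IsFreeSet (f : ↥Disk ≃ₜ ↥Disk) (X : Set ↥Disk) : Prop := (⇑f '' X) ∩ X = ∅

/-- An open disk: an open subset of `Disk` homeomorphic to `Disk`. -/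
def IsOpenDisk (U : Set ↥Disk) : Prop := IsOpen U ∧ Nonempty (↥U ≃ₜ ↥Disk)

/-- `f` is recurrent: there is a closed chain of pairwise disjoint free open disks. -/
def RecurrentHomeo (f : ↥Disk ≃ₜ ↥Disk) : Prop :=
  ∃ r : ℕ, 1 ≤ r ∧ ∃ X : ZMod r → Set ↥Disk,
    (∀ i, IsOpenDisk (X i)) ∧ (∀ i, IsFreeSet f (X i)) ∧
    (Pairwise fun i j => Disjoint (X i) (X j)) ∧
    (∀ i, ∃ k : ℤ, 1 ≤ k ∧ ((fiter f k '' X i) ∩ X (i + 1)).Nonempty)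

/-- `γ` is a segment of the disk joining `a` to `b`: the image of an injective
continuous map defined on `[0,1]` sending `0` to `a` and `1` to `b`. -/
def IsSegment (γ : Set ↥Disk) (a b : ↥Disk) : Prop :=
  ∃ g : ℝ → ↥Disk, ContinuousOn g (Set.Icc 0 1) ∧ Set.InjOn g (Set.Icc 0 1) ∧
    g 0 = a ∧ g 1 = b ∧ γ = g '' Set.Icc 0 1

/-- `γ` is a segment (with some endpoints). -/
def IsSegmentSet (γ : Set ↥Disk) : Prop := ∃ a b, IsSegment γ a b

/-- A translation arc for `f` at `z`. -/
def IsTranslationArc (f : ↥Disk ≃ₜ ↥Disk) (z : ↥Disk) (γ : Set ↥Disk) : Prop :=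
  f z ≠ z ∧ IsSegment γ z (f z) ∧
  (f (f z) = z → (⇑f '' γ) ∩ γ = {z, f z}) ∧
  (f (f z) ≠ z → (⇑f '' γ) ∩ γ = {f z})

/-- A closed disk: a subset of `Disk` homeomorphic to the closed unit disk. -/
def IsClosedDisk (D : Set ↥Disk) : Prop := Nonempty (↥D ≃ₜ ↥(Metric.closedBall (0:ℂ) 1))

/-- A `ℤ`-indexed family of subsets of the disk converges to `{p}` as `k → +∞`. -/
def TendstoSetsTop (A : ℤ → Set ↥Disk) (p : ℂ) : Prop :=
  ∀ ε > (0 : ℝ), ∃ N : ℤ, ∀ k ≥ N, ∀ x ∈ A k, dist x.1 p < ε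

/-- A `ℤ`-indexed family of subsets of the disk converges to `{p}` as `k → -∞`. -/
def TendstoSetsBot (A : ℤ → Set ↥Disk) (p : ℂ) : Prop :=
  ∀ ε > (0 : ℝ), ∃ N : ℤ, ∀ k ≤ N, ∀ x ∈ A k, dist x.1 p < ε

/-- The orbit `{f^m(z) : m ∈ ℤ}` of a point `z` of the disk. -/
def orbitSet (f : ↥Disk ≃ₜ ↥Disk) (z : ↥Disk) : Set ↥Disk :=
  Set.range fun m : ℤ => fiter f m z


/-- Auxiliary: the orbit map `m ↦ f^m(z)` is injective when the orbit converges to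
boundary points at `±∞`. -/
lemma handel_aux_orbit_inj (f : ↥Disk ≃ₜ ↥Disk) (z : ↥Disk) (a w : ℂ)
    (ha : a ∈ Metric.sphere (0:ℂ) 1) (hw : w ∈ Metric.sphere (0:ℂ) 1)
    (hm : Tendsto (fun k : ℤ => (fiter f k z).1) atBot (nhds a))
    (hp : Tendsto (fun k : ℤ => (fiter f k z).1) atTop (nhds w)) :
    Function.Injective fun m : ℤ => fiter f m z := by
  intro u v huv
  by_contra hne
  simp only [fiter] at huv
  set g := f.toEquiv with hg
  have hfix : (g ^ (u - v)) z = z := by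
    apply (g ^ v).injective
    rw [← Equiv.Perm.mul_apply, ← zpow_add]
    have : v + (u - v) = u := by ring
    rw [this, huv]
  have hall : ∀ m : ℤ, (g ^ (m * (u - v))) z = z := by
    intro m
    rw [mul_comm, zpow_mul]
    exact Equiv.Perm.zpow_apply_eq_self_of_apply_eq_self hfix m
  have hz1 : dist (z : ℂ) 0 < 1 := mem_ball.mp z.2
  set p := u - v with hpdef
  have hp0 : p ≠ 0 := sub_ne_zero.mpr hne
  have key : ∀ c : ℂ, Tendsto (fun m : ℤ => ((fiter f (m * p) z : ↥Disk) : ℂ)) atTop (nhds c) →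
      dist c 0 = 1 → False := by
    intro c hc hc1
    have hc' : (fun m : ℤ => ((fiter f (m * p) z : ↥Disk) : ℂ)) = fun _ => (z : ℂ) := by
      funext m
      simp only [fiter]
      rw [hall m]
    rw [hc'] at hc
    have hza : c = (z : ℂ) := tendsto_nhds_unique hc tendsto_const_nhds
    rw [hza] at hc1
    linarith
  rcases (Ne.lt_or_gt hp0) with hplt | hpgt
  · have htend : Tendsto (fun m : ℤ => m * p) atTop atBot := by
      apply tendsto_atBot_mono' atTop (f₁ := fun m : ℤ => -m) ?_ tendsto_neg_atTop_atBot
      filter_upwards [eventually_ge_atTop (0:ℤ)] with m hm0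
      nlinarith
    exact key a (hm.comp htend) (mem_sphere.mp ha)
  · have htend : Tendsto (fun m : ℤ => m * p) atTop atTop := by
      apply tendsto_atTop_mono' atTop (f₁ := fun m : ℤ => m) ?_ tendsto_id
      filter_upwards [eventually_ge_atTop (0:ℤ)] with m hm0
      nlinarith
    exact key w (hp.comp htend) (mem_sphere.mp hw)

/-- Auxiliary: tail arcs are uniformly close to one of the two limit points. -/
lemma handel_aux_tail (γ : ℤ → Set ↥Disk) (a w : ℂ)
    (hm : TendstoSetsBot γ a) (hp : TendstoSetsTop γ w) {ε : ℝ} (hε : 0 < ε) :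
    ∃ N : ℤ, 0 ≤ N ∧ ∀ k : ℤ, N ≤ k ∨ k ≤ -N → ∀ x ∈ γ k,
      dist x.1 a < ε ∨ dist x.1 w < ε := by
  obtain ⟨N₁, h₁⟩ := hp ε hε
  obtain ⟨N₂, h₂⟩ := hm ε hε
  refine ⟨max (max N₁ (-N₂)) 0, le_max_right _ _, fun k hk x hx => ?_⟩
  have hA : N₁ ≤ max (max N₁ (-N₂)) 0 := le_trans (le_max_left _ _) (le_max_left _ _)
  have hB : -N₂ ≤ max (max N₁ (-N₂)) 0 := le_trans (le_max_right _ _) (le_max_left _ _)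
  rcases hk with hk | hk
  · exact Or.inr (h₁ k (by linarith) x hx)
  · exact Or.inl (h₂ k (by linarith) x hx)

/-- Proposition 4.4. -/
theorem handel_prop_4_4 (f : ↥Disk ≃ₜ ↥Disk) (n : ℕ) (hn : 1 ≤ n)
    (z : ZMod n → ↥Disk) (α ω : ZMod n → ℂ)
    (hα : ∀ i, α i ∈ Metric.sphere (0:ℂ) 1) (hω : ∀ i, ω i ∈ Metric.sphere (0:ℂ) 1)
    (hαinj : Function.Injective α) (hωinj : Function.Injective ω)
    (hαω : ∀ i j, α i ≠ ω j)
    (hlimₘ : ∀ i, Tendsto (fun k : ℤ => (fiter f k (z i)).1) atBot (nhds (α i)))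
    (hlimₚ : ∀ i, Tendsto (fun k : ℤ => (fiter f k (z i)).1) atTop (nhds (ω i)))
    (Γ : ZMod n → ℝ → ↥Disk) (hcont : ∀ i, Continuous (Γ i))
    (γ : ZMod n → ℤ → Set ↥Disk)
    (hΓim : ∀ i, ∀ k : ℤ, γ i k = Γ i '' Set.Icc (k : ℝ) (k + 1))
    (hΓinj : ∀ i, ∀ k : ℤ, Set.InjOn (Γ i) (Set.Icc (k : ℝ) (k + 1)))
    (hΓk : ∀ i, ∀ k : ℤ, Γ i (k : ℝ) = fiter f k (z i))
    (harc : ∀ i k, IsTranslationArc f (fiter f k (z i)) (γ i k))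
    (hpast : ∀ i, ∀ k k' : ℤ, k' < k → (⇑f '' γ i k) ∩ γ i k' = ∅)
    (hconvₘ : ∀ i, TendstoSetsBot (γ i) (α i))
    (hconvₚ : ∀ i, TendstoSetsTop (γ i) (ω i))
    (horb₁ : ∀ i k, γ i k ∩ orbitSet f (z i) = {fiter f k (z i), fiter f (k + 1) (z i)})
    (horb₂ : ∀ i i' k, i' ≠ i → γ i k ∩ orbitSet f (z i') = ∅)
    (hfin : ∀ i k i' k', ((i', k') : ZMod n × ℤ) ≠ (i, k - 1) →
      ((i', k') : ZMod n × ℤ) ≠ (i, k) → ((i', k') : ZMod n × ℤ) ≠ (i, k + 1) →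
      (γ i k ∩ γ i' k').Finite)
    (htriple : ∀ i k i' k' i'' k'', ((i, k) : ZMod n × ℤ) ≠ (i', k') →
      ((i, k) : ZMod n × ℤ) ≠ (i'', k'') → ((i', k') : ZMod n × ℤ) ≠ (i'', k'') →
      γ i k ∩ γ i' k' ∩ γ i'' k'' = ∅) :
    (∀ i, ∀ k : ℤ, ∀ t : ℝ, Γ i t = fiter f k (z i) → t = k) ∧
    (∀ i, ∀ t₁ t₂ t₃ : ℝ, Γ i t₁ = Γ i t₂ → Γ i t₁ = Γ i t₃ →
      t₁ = t₂ ∨ t₁ = t₃ ∨ t₂ = t₃) ∧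
    (∀ i i', i ≠ i' → Set.range (Γ i) ∩ orbitSet f (z i') = ∅) ∧
    (∀ i i', i ≠ i' → (Set.range (Γ i) ∩ Set.range (Γ i')).Finite) ∧
    (∀ i i', i ≠ i' → ∀ x ∈ Set.range (Γ i) ∩ Set.range (Γ i'),
      (∀ t t' : ℝ, Γ i t = x → Γ i t' = x → t = t') ∧
      (∀ s s' : ℝ, Γ i' s = x → Γ i' s' = x → s = s')) ∧
    (∀ i i' i'', i ≠ i' → i ≠ i'' → i' ≠ i'' →
      Set.range (Γ i) ∩ Set.range (Γ i') ∩ Set.range (Γ i'') = ∅) := by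
    -- basic facts
  have hfloor : ∀ (i : ZMod n) (t : ℝ), Γ i t ∈ γ i ⌊t⌋ := by
    intro i t
    rw [hΓim i ⌊t⌋]
    exact ⟨t, ⟨Int.floor_le t, (Int.lt_floor_add_one t).le⟩, rfl⟩
  have hIcc : ∀ t : ℝ, t ∈ Set.Icc ((⌊t⌋ : ℝ)) ((⌊t⌋ : ℝ) + 1) :=
    fun t => ⟨Int.floor_le t, (Int.lt_floor_add_one t).le⟩
  have hoinj : ∀ i, Function.Injective fun m : ℤ => fiter f m (z i) := fun i =>
    handel_aux_orbit_inj f (z i) (α i) (ω i) (hα i) (hω i) (hlimₘ i) (hlimₚ i)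
  -- Part 1
  have part1 : ∀ i, ∀ k : ℤ, ∀ t : ℝ, Γ i t = fiter f k (z i) → t = k := by
    intro i k t ht
    have hmem : Γ i t ∈ γ i ⌊t⌋ ∩ orbitSet f (z i) := ⟨hfloor i t, ht ▸ ⟨k, rfl⟩⟩
    rw [horb₁ i ⌊t⌋] at hmem
    rcases hmem with h | h
    · have hk : k = ⌊t⌋ := hoinj i (ht.symm.trans h)
      rw [hk]
      exact hΓinj i ⌊t⌋ (hIcc t) ⟨le_refl _, by linarith⟩ (by rw [ht, hk, hΓk i ⌊t⌋])
    · have hk : k = ⌊t⌋ + 1 := hoinj i (ht.symm.trans h)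
      have h1 : ((⌊t⌋ : ℝ) + 1) ∈ Set.Icc ((⌊t⌋ : ℝ)) ((⌊t⌋ : ℝ) + 1) :=
        ⟨by linarith, le_refl _⟩
      have h2 : t = ((⌊t⌋ : ℝ) + 1) := by
        apply hΓinj i ⌊t⌋ (hIcc t) h1
        rw [ht, hk]
        have h3 := hΓk i (⌊t⌋ + 1)
        push_cast at h3
        rw [h3]
      rw [h2, hk]
      push_cast
      ring
  -- Part 2
  have part2 : ∀ i, ∀ t₁ t₂ t₃ : ℝ, Γ i t₁ = Γ i t₂ → Γ i t₁ = Γ i t₃ →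
      t₁ = t₂ ∨ t₁ = t₃ ∨ t₂ = t₃ := by
    intro i t₁ t₂ t₃ h12 h13
    by_contra hcon
    push_neg at hcon
    obtain ⟨h12', h13', h23'⟩ := hcon
    have hm12 : ⌊t₁⌋ ≠ ⌊t₂⌋ := fun h =>
      h12' (hΓinj i ⌊t₁⌋ (hIcc t₁) (by rw [h]; exact hIcc t₂) h12)
    have hm13 : ⌊t₁⌋ ≠ ⌊t₃⌋ := fun h =>
      h13' (hΓinj i ⌊t₁⌋ (hIcc t₁) (by rw [h]; exact hIcc t₃) h13)
    have hm23 : ⌊t₂⌋ ≠ ⌊t₃⌋ := fun h =>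
      h23' (hΓinj i ⌊t₂⌋ (hIcc t₂) (by rw [h]; exact hIcc t₃) (h12 ▸ h13))
    have hemp := htriple i ⌊t₁⌋ i ⌊t₂⌋ i ⌊t₃⌋
      (fun h => hm12 (congrArg Prod.snd h)) (fun h => hm13 (congrArg Prod.snd h))
      (fun h => hm23 (congrArg Prod.snd h))
    have hx : Γ i t₁ ∈ γ i ⌊t₁⌋ ∩ γ i ⌊t₂⌋ ∩ γ i ⌊t₃⌋ :=
      ⟨⟨hfloor i t₁, h12 ▸ hfloor i t₂⟩, h13 ▸ hfloor i t₃⟩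
    rw [hemp] at hx
    exact hx
  -- Part 3
  have part3 : ∀ i i', i ≠ i' → Set.range (Γ i) ∩ orbitSet f (z i') = ∅ := by
    intro i i' hii'
    rw [Set.eq_empty_iff_forall_notMem]
    rintro x ⟨⟨t, ht⟩, hxo⟩
    have hx : x ∈ γ i ⌊t⌋ ∩ orbitSet f (z i') := ⟨ht ▸ hfloor i t, hxo⟩
    rw [horb₂ i i' ⌊t⌋ hii'.symm] at hx
    exact hx
  -- Part 4
  have part4 : ∀ i i', i ≠ i' → (Set.range (Γ i) ∩ Set.range (Γ i')).Finite := by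
    intro i i' hii'
    have hd1 : 0 < dist (α i) (α i') := dist_pos.mpr (fun h => hii' (hαinj h))
    have hd2 : 0 < dist (ω i) (ω i') := dist_pos.mpr (fun h => hii' (hωinj h))
    have hd3 : 0 < dist (α i) (ω i') := dist_pos.mpr (hαω i i')
    have hd4 : 0 < dist (ω i) (α i') := dist_pos.mpr (Ne.symm (hαω i' i))
    set ε₀ : ℝ := min (min (dist (α i) (α i')) (dist (ω i) (ω i')))
      (min (dist (α i) (ω i')) (dist (ω i) (α i'))) / 2 with hε₀def
    have hε₀ : 0 < ε₀ := by
      apply div_pos _ (by norm_num)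
      exact lt_min (lt_min hd1 hd2) (lt_min hd3 hd4)
    have hsep : ∀ c c' : ℂ, (c = α i ∨ c = ω i) → (c' = α i' ∨ c' = ω i') →
        2 * ε₀ ≤ dist c c' := by
      have hh : 2 * ε₀ = min (min (dist (α i) (α i')) (dist (ω i) (ω i')))
          (min (dist (α i) (ω i')) (dist (ω i) (α i'))) := by rw [hε₀def]; ring
      rintro c c' (rfl | rfl) (rfl | rfl) <;> rw [hh]
      · exact (min_le_left _ _).trans (min_le_left _ _)
      · exact (min_le_right _ _).trans (min_le_left _ _)
      · exact (min_le_right _ _).trans (min_le_right _ _)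
      · exact (min_le_left _ _).trans (min_le_right _ _)
    obtain ⟨N₁, hN₁0, hN₁⟩ := handel_aux_tail (γ i) (α i) (ω i) (hconvₘ i) (hconvₚ i) hε₀
    obtain ⟨N₂, hN₂0, hN₂⟩ := handel_aux_tail (γ i') (α i') (ω i') (hconvₘ i') (hconvₚ i') hε₀
    set M₀ : ℤ := max N₁ N₂ with hM₀def
    have hM₀0 : 0 ≤ M₀ := le_trans hN₁0 (le_max_left _ _)
    have htail₀ : ∀ k : ℤ, M₀ ≤ k ∨ k ≤ -M₀ → ∀ x ∈ γ i k,
        dist x.1 (α i) < ε₀ ∨ dist x.1 (ω i) < ε₀ := by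
      intro k hk x hx
      apply hN₁ k _ x hx
      have h1 := le_max_left N₁ N₂
      rcases hk with hk | hk
      · exact Or.inl (by linarith)
      · exact Or.inr (by linarith)
    have htail₀' : ∀ k : ℤ, M₀ ≤ k ∨ k ≤ -M₀ → ∀ x ∈ γ i' k,
        dist x.1 (α i') < ε₀ ∨ dist x.1 (ω i') < ε₀ := by
      intro k hk x hx
      apply hN₂ k _ x hx
      have h1 := le_max_right N₁ N₂
      rcases hk with hk | hk
      · exact Or.inl (by linarith)
      · exact Or.inr (by linarith)
    set K : Set ℂ := (fun t => ((Γ i t : ℂ))) '' Set.Icc (-(M₀:ℝ) - 1) ((M₀:ℝ) + 1) ∪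
      (fun t => ((Γ i' t : ℂ))) '' Set.Icc (-(M₀:ℝ) - 1) ((M₀:ℝ) + 1) with hKdef
    have hKc : IsCompact K := by
      apply IsCompact.union
      · exact isCompact_Icc.image (continuous_subtype_val.comp (hcont i))
      · exact isCompact_Icc.image (continuous_subtype_val.comp (hcont i'))
    have hM₀R : (0:ℝ) ≤ (M₀:ℝ) := by exact_mod_cast hM₀0
    have hKne : K.Nonempty :=
      ⟨(Γ i 0 : ℂ), Or.inl ⟨0, ⟨by linarith, by linarith⟩, rfl⟩⟩
    obtain ⟨x₀, hx₀K, hx₀max⟩ := hKc.exists_isMaxOn hKne continuous_norm.continuousOn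
    set r : ℝ := ‖x₀‖ with hrdef
    have hr1 : r < 1 := by
      rcases hx₀K with ⟨t, _, rfl⟩ | ⟨t, _, rfl⟩
      · exact mem_ball_zero_iff.mp (Γ i t).2
      · exact mem_ball_zero_iff.mp (Γ i' t).2
    have hε₁ : (0:ℝ) < 1 - r := by linarith
    obtain ⟨N₃, hN₃0, hN₃⟩ := handel_aux_tail (γ i) (α i) (ω i) (hconvₘ i) (hconvₚ i) hε₁
    obtain ⟨N₄, hN₄0, hN₄⟩ := handel_aux_tail (γ i') (α i') (ω i') (hconvₘ i') (hconvₚ i') hε₁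
    set M₁ : ℤ := max (max N₃ N₄) M₀ with hM₁def
    have hM₀M₁ : M₀ ≤ M₁ := le_max_right _ _
    have htail₁ : ∀ k : ℤ, M₁ ≤ k ∨ k ≤ -M₁ → ∀ x ∈ γ i k,
        dist x.1 (α i) < 1 - r ∨ dist x.1 (ω i) < 1 - r := by
      intro k hk x hx
      apply hN₃ k _ x hx
      have h1 : N₃ ≤ M₁ := le_trans (le_max_left _ _) (le_max_left _ _)
      rcases hk with hk | hk
      · exact Or.inl (by linarith)
      · exact Or.inr (by linarith)
    have htail₁' : ∀ k : ℤ, M₁ ≤ k ∨ k ≤ -M₁ → ∀ x ∈ γ i' k,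
        dist x.1 (α i') < 1 - r ∨ dist x.1 (ω i') < 1 - r := by
      intro k hk x hx
      apply hN₄ k _ x hx
      have h1 : N₄ ≤ M₁ := le_trans (le_max_right _ _) (le_max_left _ _)
      rcases hk with hk | hk
      · exact Or.inl (by linarith)
      · exact Or.inr (by linarith)
    have hmidK : ∀ k : ℤ, -M₀ < k → k < M₀ → ∀ x ∈ γ i k ∪ γ i' k, ‖(x:ℂ)‖ ≤ r := by
      intro k hk1 hk2 x hx
      have hc1 : (-(M₀:ℝ)) ≤ (k:ℝ) := by exact_mod_cast hk1.le
      have hc2 : (k:ℝ) ≤ (M₀:ℝ) := by exact_mod_cast hk2.le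
      rcases hx with hx | hx
      · rw [hΓim i k] at hx
        obtain ⟨t, ht, rfl⟩ := hx
        exact hx₀max (Or.inl ⟨t, ⟨by linarith [ht.1], by linarith [ht.2]⟩, rfl⟩)
      · rw [hΓim i' k] at hx
        obtain ⟨t, ht, rfl⟩ := hx
        exact hx₀max (Or.inr ⟨t, ⟨by linarith [ht.1], by linarith [ht.2]⟩, rfl⟩)
    have stepB : ∀ (x : ↥Disk) (c : ℂ), dist c 0 = 1 → ‖(x:ℂ)‖ ≤ r →
        dist x.1 c < 1 - r → False := by
      intro x c hc hxr hxc
      have htri := dist_triangle c x.1 0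
      rw [dist_comm c x.1, hc, dist_zero_right] at htri
      linarith
    have key : ∀ k k' : ℤ, (γ i k ∩ γ i' k').Nonempty →
        -M₁ ≤ k ∧ k ≤ M₁ ∧ -M₁ ≤ k' ∧ k' ≤ M₁ := by
      rintro k k' ⟨x, hxk, hxk'⟩
      have stepA : ¬ ((M₀ ≤ k ∨ k ≤ -M₀) ∧ (M₀ ≤ k' ∨ k' ≤ -M₀)) := by
        rintro ⟨hk, hk'⟩
        have h1 := htail₀ k hk x hxk
        have h2 := htail₀' k' hk' x hxk'
        rcases h1 with h1 | h1 <;> rcases h2 with h2 | h2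
        · have hs := hsep (α i) (α i') (Or.inl rfl) (Or.inl rfl)
          have htri := dist_triangle (α i) x.1 (α i')
          rw [dist_comm (α i) x.1] at htri
          linarith
        · have hs := hsep (α i) (ω i') (Or.inl rfl) (Or.inr rfl)
          have htri := dist_triangle (α i) x.1 (ω i')
          rw [dist_comm (α i) x.1] at htri
          linarith
        · have hs := hsep (ω i) (α i') (Or.inr rfl) (Or.inl rfl)
          have htri := dist_triangle (ω i) x.1 (α i')
          rw [dist_comm (ω i) x.1] at htri
          linarith
        · have hs := hsep (ω i) (ω i') (Or.inr rfl) (Or.inr rfl)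
          have htri := dist_triangle (ω i) x.1 (ω i')
          rw [dist_comm (ω i) x.1] at htri
          linarith
      by_cases hmid : -M₀ < k ∧ k < M₀
      · -- k is middle: k' cannot be in the far tail
        have hk' : -M₁ ≤ k' ∧ k' ≤ M₁ := by
          by_contra hc
          push_neg at hc
          have hk'tail : M₁ ≤ k' ∨ k' ≤ -M₁ := by omega
          have hxr := hmidK k hmid.1 hmid.2 x (Or.inl hxk)
          rcases htail₁' k' hk'tail x hxk' with h | h
          · exact stepB x (α i') (mem_sphere.mp (hα i')) hxr h
          · exact stepB x (ω i') (mem_sphere.mp (hω i')) hxr h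
        exact ⟨by omega, by omega, hk'.1, hk'.2⟩
      · -- k is in the tail w.r.t. M₀, so by step A, k' is middle
        have hktail : M₀ ≤ k ∨ k ≤ -M₀ := by omega
        have hk'mid : -M₀ < k' ∧ k' < M₀ := by
          by_contra hc
          push_neg at hc
          exact stepA ⟨hktail, by omega⟩
        have hk : -M₁ ≤ k ∧ k ≤ M₁ := by
          by_contra hc
          push_neg at hc
          have hktail₁ : M₁ ≤ k ∨ k ≤ -M₁ := by omega
          have hxr := hmidK k' hk'mid.1 hk'mid.2 x (Or.inr hxk')
          rcases htail₁ k hktail₁ x hxk with h | h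
          · exact stepB x (α i) (mem_sphere.mp (hα i)) hxr h
          · exact stepB x (ω i) (mem_sphere.mp (hω i)) hxr h
        exact ⟨hk.1, hk.2, by omega, by omega⟩
    have hsub : Set.range (Γ i) ∩ Set.range (Γ i') ⊆
        ⋃ k ∈ Set.Icc (-M₁) M₁, ⋃ k' ∈ Set.Icc (-M₁) M₁, γ i k ∩ γ i' k' := by
      rintro x ⟨⟨t, ht⟩, ⟨s, hs⟩⟩
      have h1 : x ∈ γ i ⌊t⌋ := ht ▸ hfloor i t
      have h2 : x ∈ γ i' ⌊s⌋ := hs ▸ hfloor i' s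
      obtain ⟨a1, a2, a3, a4⟩ := key ⌊t⌋ ⌊s⌋ ⟨x, h1, h2⟩
      simp only [Set.mem_iUnion]
      exact ⟨⌊t⌋, ⟨a1, a2⟩, ⌊s⌋, ⟨a3, a4⟩, h1, h2⟩
    apply Set.Finite.subset _ hsub
    apply Set.Finite.biUnion (Set.finite_Icc (-M₁) M₁)
    intro k _
    apply Set.Finite.biUnion (Set.finite_Icc (-M₁) M₁)
    intro k' _
    exact hfin i k i' k' (fun h => hii' (congrArg Prod.fst h).symm)
      (fun h => hii' (congrArg Prod.fst h).symm)
      (fun h => hii' (congrArg Prod.fst h).symm)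
  -- Part 5
  have part5 : ∀ i i', i ≠ i' → ∀ x ∈ Set.range (Γ i) ∩ Set.range (Γ i'),
      (∀ t t' : ℝ, Γ i t = x → Γ i t' = x → t = t') ∧
      (∀ s s' : ℝ, Γ i' s = x → Γ i' s' = x → s = s') := by
    rintro i i' hii' x ⟨⟨t₀, ht₀⟩, ⟨s₀, hs₀⟩⟩
    constructor
    · intro t t' ht ht'
      by_contra hne
      have hm : ⌊t⌋ ≠ ⌊t'⌋ := fun h =>
        hne (hΓinj i ⌊t⌋ (hIcc t) (by rw [h]; exact hIcc t') (ht.trans ht'.symm))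
      have hemp := htriple i ⌊t⌋ i ⌊t'⌋ i' ⌊s₀⌋ (fun h => hm (congrArg Prod.snd h))
        (fun h => hii' (congrArg Prod.fst h)) (fun h => hii' (congrArg Prod.fst h))
      have hx : x ∈ γ i ⌊t⌋ ∩ γ i ⌊t'⌋ ∩ γ i' ⌊s₀⌋ :=
        ⟨⟨ht ▸ hfloor i t, ht' ▸ hfloor i t'⟩, hs₀ ▸ hfloor i' s₀⟩
      rw [hemp] at hx
      exact hx
    · intro s s' hs hs'
      by_contra hne
      have hm : ⌊s⌋ ≠ ⌊s'⌋ := fun h =>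
        hne (hΓinj i' ⌊s⌋ (hIcc s) (by rw [h]; exact hIcc s') (hs.trans hs'.symm))
      have hemp := htriple i' ⌊s⌋ i' ⌊s'⌋ i ⌊t₀⌋ (fun h => hm (congrArg Prod.snd h))
        (fun h => hii' (congrArg Prod.fst h).symm) (fun h => hii' (congrArg Prod.fst h).symm)
      have hx : x ∈ γ i' ⌊s⌋ ∩ γ i' ⌊s'⌋ ∩ γ i ⌊t₀⌋ :=
        ⟨⟨hs ▸ hfloor i' s, hs' ▸ hfloor i' s'⟩, ht₀ ▸ hfloor i t₀⟩
      rw [hemp] at hx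
      exact hx
  -- Part 6
  have part6 : ∀ i i' i'', i ≠ i' → i ≠ i'' → i' ≠ i'' →
      Set.range (Γ i) ∩ Set.range (Γ i') ∩ Set.range (Γ i'') = ∅ := by
    intro i i' i'' h1 h2 h3
    rw [Set.eq_empty_iff_forall_notMem]
    rintro x ⟨⟨⟨t, ht⟩, ⟨s, hs⟩⟩, ⟨u, hu⟩⟩
    have hemp := htriple i ⌊t⌋ i' ⌊s⌋ i'' ⌊u⌋ (fun h => h1 (congrArg Prod.fst h))
      (fun h => h2 (congrArg Prod.fst h)) (fun h => h3 (congrArg Prod.fst h))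
    have hx : x ∈ γ i ⌊t⌋ ∩ γ i' ⌊s⌋ ∩ γ i'' ⌊u⌋ :=
      ⟨⟨ht ▸ hfloor i t, hs ▸ hfloor i' s⟩, hu ▸ hfloor i'' u⟩
    rw [hemp] at hx
    exact hx
  exact ⟨part1, part2, part3, part4, part5, part6⟩
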